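/- Suppose E is C¹ and bounded below, and along iterates one has E(x_{n+1}) ≤ E(x_n) - C ‖∇E(x_n)‖⁴/‖p_n‖² with C > 0 and ‖p_n‖² ≤ C' (n+1). Then lim inf_{n→∞} ‖∇E(x_n)‖ = 0. -/

import Mathlib

theorem stmt7 (d : ℕ) (E : EuclideanSpace ℝ (Fin d) → ℝ)
    (C C' : ℝ) (hC : 0 < C) (hC' : 0 < C')
    (hE : ContDiff ℝ 1 E)
    (hbdd : BddBelow (Set.range E))
    (x p : ℕ → EuclideanSpace ℝ (Fin d))
    (hp : ∀ n, p n ≠ 0)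
    (hdec : ∀ n, E (x (n + 1)) ≤ E (x n) - C * ‖gradient E (x n)‖ ^ 4 / ‖p n‖ ^ 2)
    (hpbound : ∀ n, ‖p n‖ ^ 2 ≤ C' * (n + 1)) :
    Filter.liminf (fun n => ‖gradient E (x n)‖) Filter.atTop = 0 := by
  obtain ⟨m, hm⟩ := hbdd
  set g : ℕ → ℝ := fun n => ‖gradient E (x n)‖ with hg
  set a : ℕ → ℝ := fun n => C * g n ^ 4 / ‖p n‖ ^ 2 with ha
  have hpn : ∀ n, (0:ℝ) < ‖p n‖ ^ 2 := fun n => pow_pos (norm_pos_iff.2 (hp n)) 2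
  have hanneg : ∀ n, 0 ≤ a n := fun n => by
    have := (hpn n).le
    positivity
  -- partial sums bounded
  have hsum : ∀ n, ∑ k ∈ Finset.range n, a k ≤ E (x 0) - m := by
    intro n
    have key : ∀ n, ∑ k ∈ Finset.range n, a k ≤ E (x 0) - E (x n) := by
      intro n
      induction n with
      | zero => simp
      | succ n ih =>
        rw [Finset.sum_range_succ]
        have := hdec n
        linarith
    have hmx : m ≤ E (x n) := hm ⟨x n, rfl⟩
    linarith [key n]
  have hSa : Summable a := summable_of_sum_range_le hanneg hsum
  -- summability of g^4/(n+1)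
  have hSb : Summable (fun n : ℕ => g n ^ 4 / (n + 1)) := by
    apply Summable.of_nonneg_of_le (fun n => by positivity)
      (fun n => ?_) (hSa.mul_left (C' / C))
    have e1 : C' / C * (C * g n ^ 4 / ‖p n‖ ^ 2) = C' * g n ^ 4 / ‖p n‖ ^ 2 := by
      rw [div_mul_div_comm, show C' * (C * g n ^ 4) = C * (C' * g n ^ 4) by ring,
        mul_div_mul_left _ _ hC.ne']
    have e2 : g n ^ 4 / ((n:ℝ) + 1) = C' * g n ^ 4 / (C' * ((n:ℝ) + 1)) := by
      rw [mul_div_mul_left _ _ (ne_of_gt hC')]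
    rw [e1, e2]
    exact div_le_div_of_nonneg_left (by positivity) (hpn n) (hpbound n)
  -- frequently small
  have hfreq : ∀ ε : ℝ, 0 < ε → ∃ᶠ n in Filter.atTop, g n ≤ ε := by
    intro ε hε
    by_contra h
    rw [Filter.not_frequently] at h
    simp only [not_le] at h
    obtain ⟨N, hN⟩ := Filter.eventually_atTop.1 h
    have hsum2 : Summable (fun n : ℕ => g (n + N) ^ 4 / ((n + N : ℕ) + 1)) :=
      (summable_nat_add_iff N).2 hSb
    have hsum3 : Summable (fun n : ℕ => ε ^ 4 / ((n + N : ℕ) + 1)) := by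
      apply Summable.of_nonneg_of_le (fun n => by positivity) (fun n => ?_) hsum2
      have hgn := (hN (n + N) (Nat.le_add_left N n)).le
      have : ε ^ 4 ≤ g (n + N) ^ 4 := by
        have := pow_le_pow_left₀ hε.le hgn 4
        simpa using this
      apply div_le_div_of_nonneg_right this (by positivity)
    have hsum4 : Summable (fun n : ℕ => ε ^ 4 / ((n:ℝ) + 1)) :=
      (summable_nat_add_iff N).1 (by exact_mod_cast hsum3)
    have hsum5 : Summable (fun n : ℕ => 1 / ((n:ℝ) + 1)) := by
      have := hsum4.mul_left (ε ^ 4)⁻¹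
      refine this.congr fun n => ?_
      field_simp
    have : Summable (fun n : ℕ => 1 / (n:ℝ)) := by
      have := (summable_nat_add_iff 1).2 hsum5
      refine ((summable_nat_add_iff 1).1 ?_)
      exact_mod_cast hsum5
    exact Real.not_summable_one_div_natCast this
  -- conclude
  have hbd : Filter.IsBoundedUnder (· ≥ ·) Filter.atTop g :=
    ⟨0, Filter.eventually_map.2 (Filter.Eventually.of_forall fun n => norm_nonneg _)⟩
  have hle : Filter.liminf g Filter.atTop ≤ 0 := by
    refine le_of_forall_pos_le_add fun ε hε => ?_
    have := Filter.liminf_le_of_frequently_le (hfreq ε hε) hbd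
    linarith
  have hge : 0 ≤ Filter.liminf g Filter.atTop :=
    Filter.le_liminf_of_le (Filter.IsCoboundedUnder.of_frequently_le (hfreq 1 one_pos))
      (Filter.Eventually.of_forall fun n => norm_nonneg _)
  exact le_antisymm hle hge
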